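/- Let n ∈ ℕ, p ∈ [0,1]^n, and let f : {0,1}^n → ℝ be monotone and 1-Lipschitz. Then for every s ∈ (0,1] and every t > 0, the measure under μ_{e^{-s}p} of the set {x ∈ {0,1}^n : f(x) ≥ ∫ f dμ_p + t} is at most e^{-s t}. (That is, Pr[f(X^{(s)}) ≥ E[f(X)] + t] ≤ e^{-st}, where X ∼ μ_p and X^{(s)} ∼ μ_{e^{-s}p}.) -/

import Mathlib

open MeasureTheory

/-- The Bernoulli measure on `Bool` with parameter `q`. -/
noncomputable def bernoulliMeasure (q : ℝ) : Measure Bool :=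
  (ENNReal.ofReal q) • Measure.dirac true + (ENNReal.ofReal (1 - q)) • Measure.dirac false

/-- The product Bernoulli measure `μ_p` on `{0,1}^n`. -/
noncomputable def productBernoulli {n : ℕ} (p : Fin n → ℝ) : Measure (Fin n → Bool) :=
  Measure.pi fun i => bernoulliMeasure (p i)

/-- `f` is 1-Lipschitz with respect to the Hamming distance on `{0,1}^n`. -/
def OneLipschitz {n : ℕ} (f : (Fin n → Bool) → ℝ) : Prop :=
  ∀ x y : Fin n → Bool,
    |f x - f y| ≤ (Finset.univ.filter fun i => x i ≠ y i).card

/-- weight of a point under the product Bernoulli measure -/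
noncomputable def BW {n : ℕ} (q : Fin n → ℝ) (x : Fin n → Bool) : ℝ :=
  ∏ i, (if x i then q i else 1 - q i)

lemma BW_nonneg {n : ℕ} {q : Fin n → ℝ} (hq : ∀ i, q i ∈ Set.Icc (0:ℝ) 1)
    (x : Fin n → Bool) : 0 ≤ BW q x := by
  apply Finset.prod_nonneg
  intro i _
  rcases (hq i) with ⟨h0, h1⟩
  cases x i <;> simp <;> linarith

lemma bernoulliMeasure_singleton (q : ℝ) (b : Bool) :
    bernoulliMeasure q {b} = ENNReal.ofReal (if b then q else 1 - q) := by
  cases b <;> simp [bernoulliMeasure, Measure.dirac_apply]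

instance bernoulliMeasure_finite (q : ℝ) : IsFiniteMeasure (bernoulliMeasure q) := by
  constructor
  simp [bernoulliMeasure]

lemma productBernoulli_singleton {n : ℕ} (q : Fin n → ℝ)
    (hq : ∀ i, q i ∈ Set.Icc (0:ℝ) 1) (x : Fin n → Bool) :
    productBernoulli q {x} = ENNReal.ofReal (BW q x) := by
  rw [productBernoulli, ← Set.univ_pi_singleton x, Measure.pi_pi]
  rw [BW, ENNReal.ofReal_prod_of_nonneg]
  · exact Finset.prod_congr rfl fun i _ => bernoulliMeasure_singleton (q i) (x i)
  · intro i _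
    rcases (hq i) with ⟨h0, h1⟩
    cases x i <;> simp <;> linarith

lemma bernoulliMeasure_prob {q : ℝ} (hq : q ∈ Set.Icc (0:ℝ) 1) :
    IsProbabilityMeasure (bernoulliMeasure q) := by
  constructor
  rcases hq with ⟨h0, h1⟩
  simp [bernoulliMeasure]
  rw [← ENNReal.ofReal_add h0 (by linarith)]
  norm_num

lemma exp_core (s p0 D : ℝ) (hs : 0 < s) (hp0 : p0 ∈ Set.Icc (0:ℝ) 1)
    (hD0 : 0 ≤ D) (hD1 : D ≤ 1) :
    1 + Real.exp (-s) * p0 * (Real.exp (s * D) - 1) ≤ Real.exp (s * (p0 * D)) := by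
  rcases hp0 with ⟨hp0, hp1⟩
  have hsD : 0 ≤ s * D := by positivity
  have hmul : Real.exp (-(s*D)) * Real.exp (s*D) = 1 := by
    rw [← Real.exp_add]; simp
  have h0 : Real.exp (s*D) - 1 ≤ (s*D) * Real.exp (s*D) := by
    nlinarith [Real.add_one_le_exp (-(s*D)), Real.exp_pos (s*D)]
  have h1 : Real.exp (s*D) ≤ Real.exp s := by
    apply Real.exp_le_exp.2; nlinarith
  have h2 : Real.exp (s*D) - 1 ≤ (s*D) * Real.exp s := by nlinarith
  have h3 : Real.exp (-s) * Real.exp s = 1 := by rw [← Real.exp_add]; simp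
  have h4 : Real.exp (-s) * p0 * (Real.exp (s*D) - 1) ≤ p0 * (s * D) := by
    have hexp : (0:ℝ) < Real.exp (-s) := Real.exp_pos _
    have hge : 0 ≤ Real.exp (s*D) - 1 := by
      have := Real.one_le_exp hsD; linarith
    calc Real.exp (-s) * p0 * (Real.exp (s*D) - 1)
        ≤ Real.exp (-s) * p0 * ((s*D) * Real.exp s) := by
          apply mul_le_mul_of_nonneg_left h2; positivity
      _ = p0 * (s * D) * (Real.exp (-s) * Real.exp s) := by ring
      _ = p0 * (s * D) := by rw [h3]; ring
  have h5 : 1 + s * (p0 * D) ≤ Real.exp (s * (p0 * D)) := by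
    have := Real.add_one_le_exp (s * (p0 * D)); linarith
  nlinarith

lemma cons_le_cons {n : ℕ} {b b' : Bool} {y y' : Fin n → Bool}
    (hb : b ≤ b') (hy : y ≤ y') : (Fin.cons b y : Fin (n+1) → Bool) ≤ Fin.cons b' y' := by
  intro i
  refine Fin.cases ?_ ?_ i
  · simpa using hb
  · intro j; simpa using hy j

lemma hamming_cons {n : ℕ} (b : Bool) (y y' : Fin n → Bool) :
    ((Finset.univ.filter fun i : Fin (n+1) => (Fin.cons b y : Fin (n+1) → Bool) i ≠ (Fin.cons b y' : Fin (n+1) → Bool) i).card : ℝ)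
      = ((Finset.univ.filter fun i => y i ≠ y' i).card : ℝ) := by
  congr 1
  rw [Finset.card_filter, Finset.card_filter, Fin.sum_univ_succ]
  simp

lemma hamming_cons_tf {n : ℕ} (y : Fin n → Bool) :
    ((Finset.univ.filter fun i : Fin (n+1) => (Fin.cons true y : Fin (n+1) → Bool) i ≠ (Fin.cons false y : Fin (n+1) → Bool) i).card : ℝ)
      = 1 := by
  norm_cast
  rw [Finset.card_filter, Fin.sum_univ_succ]
  simp

lemma BW_cons {n : ℕ} (q : Fin (n+1) → ℝ) (b : Bool) (y : Fin n → Bool) :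
    BW q (Fin.cons b y) = (if b then q 0 else 1 - q 0) * BW (fun i => q i.succ) y := by
  rw [BW, Fin.prod_univ_succ]
  simp [BW]

lemma sum_cons {n : ℕ} (F : (Fin (n+1) → Bool) → ℝ) :
    ∑ x, F x = ∑ y : Fin n → Bool, (F (Fin.cons true y) + F (Fin.cons false y)) := by
  rw [← Equiv.sum_comp (Fin.consEquiv fun _ => Bool) F]
  rw [Fintype.sum_prod_type]
  rw [Fintype.sum_bool]
  rw [← Finset.sum_add_distrib]
  rfl

lemma mgf_bound : ∀ (n : ℕ) (p : Fin n → ℝ), (∀ i, p i ∈ Set.Icc (0:ℝ) 1) →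
    ∀ (f : (Fin n → Bool) → ℝ), Monotone f → OneLipschitz f →
    ∀ (s : ℝ), 0 < s →
    ∑ x, BW (fun i => Real.exp (-s) * p i) x * Real.exp (s * f x)
      ≤ Real.exp (s * ∑ x, BW p x * f x) := by
  intro n
  induction n with
  | zero =>
    intro p hp f _ _ s hs
    rw [Fintype.sum_unique, Fintype.sum_unique]
    simp [BW]
  | succ n ih =>
    intro p hp f hmono hlip s hs
    have hq : ∀ i : Fin (n+1), Real.exp (-s) * p i ∈ Set.Icc (0:ℝ) 1 := by
      intro i
      have h1 : Real.exp (-s) ≤ 1 := by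
        rw [show (1:ℝ) = Real.exp 0 by simp]
        exact Real.exp_le_exp.2 (by linarith)
      have h2 : (0:ℝ) < Real.exp (-s) := Real.exp_pos _
      rcases hp i with ⟨ha, hb⟩
      constructor
      · positivity
      · nlinarith
    have hp' : ∀ i : Fin n, p i.succ ∈ Set.Icc (0:ℝ) 1 := fun i => hp i.succ
    have hq' : ∀ i : Fin n, Real.exp (-s) * p i.succ ∈ Set.Icc (0:ℝ) 1 :=
      fun i => hq i.succ
    have hd : ∀ y : Fin n → Bool,
        0 ≤ f (Fin.cons true y) - f (Fin.cons false y) ∧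
          f (Fin.cons true y) - f (Fin.cons false y) ≤ 1 := by
      intro y
      constructor
      · have := hmono (cons_le_cons (show (false : Bool) ≤ true by simp) (le_refl y))
        linarith
      · have h := hlip (Fin.cons true y) (Fin.cons false y)
        rw [hamming_cons_tf] at h
        have := abs_le.1 h
        linarith
    set g : (Fin n → Bool) → ℝ :=
      fun y => f (Fin.cons false y) + p 0 * (f (Fin.cons true y) - f (Fin.cons false y))
      with hgdef
    have hgmono : Monotone g := by
      intro y y' hy
      have h1 := hmono (cons_le_cons (le_refl true) hy)
      have h0 := hmono (cons_le_cons (le_refl false) hy)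
      have hp0 := hp 0
      simp only [hgdef]
      nlinarith [hp0.1, hp0.2]
    have hglip : OneLipschitz g := by
      intro y y'
      have h1 := hlip (Fin.cons true y) (Fin.cons true y')
      have h0 := hlip (Fin.cons false y) (Fin.cons false y')
      rw [hamming_cons] at h1
      rw [hamming_cons] at h0
      obtain ⟨a1, b1⟩ := abs_le.1 h1
      obtain ⟨a0, b0⟩ := abs_le.1 h0
      have hp0 := hp 0
      rw [abs_le]
      constructor <;> simp only [hgdef] <;> nlinarith [hp0.1, hp0.2]
    have ih' := ih (fun i => p i.succ) hp' g hgmono hglip s hs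
    have key : ∀ y : Fin n → Bool,
        (Real.exp (-s) * p 0) * Real.exp (s * f (Fin.cons true y))
          + (1 - Real.exp (-s) * p 0) * Real.exp (s * f (Fin.cons false y))
        ≤ Real.exp (s * g y) := by
      intro y
      obtain ⟨hd0, hd1⟩ := hd y
      have hc := exp_core s (p 0) (f (Fin.cons true y) - f (Fin.cons false y)) hs (hp 0) hd0 hd1
      have e1 : Real.exp (s * f (Fin.cons true y))
          = Real.exp (s * f (Fin.cons false y))
            * Real.exp (s * (f (Fin.cons true y) - f (Fin.cons false y))) := by
        rw [← Real.exp_add]; ring_nf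
      have e2 : Real.exp (s * g y)
          = Real.exp (s * f (Fin.cons false y))
            * Real.exp (s * (p 0 * (f (Fin.cons true y) - f (Fin.cons false y)))) := by
        rw [← Real.exp_add, hgdef]; ring_nf
      rw [e1, e2]
      have hpos := Real.exp_pos (s * f (Fin.cons false y))
      nlinarith [mul_le_mul_of_nonneg_left hc hpos.le]
    calc ∑ x, BW (fun i => Real.exp (-s) * p i) x * Real.exp (s * f x)
        = ∑ y : Fin n → Bool,
            (BW (fun i => Real.exp (-s) * p i) (Fin.cons true y)
              * Real.exp (s * f (Fin.cons true y))
            + BW (fun i => Real.exp (-s) * p i) (Fin.cons false y)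
              * Real.exp (s * f (Fin.cons false y))) :=
          sum_cons _
      _ = ∑ y : Fin n → Bool, BW (fun i => Real.exp (-s) * p i.succ) y
            * ((Real.exp (-s) * p 0) * Real.exp (s * f (Fin.cons true y))
              + (1 - Real.exp (-s) * p 0) * Real.exp (s * f (Fin.cons false y))) := by
          apply Finset.sum_congr rfl
          intro y _
          rw [BW_cons, BW_cons]
          norm_num
          ring
      _ ≤ ∑ y : Fin n → Bool, BW (fun i => Real.exp (-s) * p i.succ) y
            * Real.exp (s * g y) := by
          apply Finset.sum_le_sum
          intro y _
          exact mul_le_mul_of_nonneg_left (key y) (BW_nonneg hq' y)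
      _ ≤ Real.exp (s * ∑ y : Fin n → Bool, BW (fun i => p i.succ) y * g y) := ih'
      _ = Real.exp (s * ∑ x, BW p x * f x) := by
          congr 1
          congr 1
          rw [sum_cons (fun x => BW p x * f x)]
          apply Finset.sum_congr rfl
          intro y _
          rw [BW_cons, BW_cons]
          simp only [hgdef]
          norm_num
          ring

lemma integral_eq_sum {n : ℕ} (p : Fin n → ℝ) (hp : ∀ i, p i ∈ Set.Icc (0:ℝ) 1)
    (f : (Fin n → Bool) → ℝ) :
    ∫ y, f y ∂(productBernoulli p) = ∑ x, BW p x * f x := by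
  haveI : ∀ i, IsProbabilityMeasure (bernoulliMeasure (p i)) :=
    fun i => bernoulliMeasure_prob (hp i)
  haveI : IsProbabilityMeasure (productBernoulli p) := by
    rw [productBernoulli]; infer_instance
  rw [integral_fintype Integrable.of_finite]
  apply Finset.sum_congr rfl
  intro x _
  rw [measureReal_def, productBernoulli_singleton p hp x, ENNReal.toReal_ofReal (BW_nonneg hp x), smul_eq_mul]

theorem bicriterion_concentration {n : ℕ} (p : Fin n → ℝ)
    (hp : ∀ i, p i ∈ Set.Icc (0 : ℝ) 1)
    (f : (Fin n → Bool) → ℝ) (hf_mono : Monotone f) (hf_lip : OneLipschitz f)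
    (s t : ℝ) (hs : s ∈ Set.Ioc (0 : ℝ) 1) (ht : 0 < t) :
    productBernoulli (fun i => Real.exp (-s) * p i)
        {x | (∫ y, f y ∂(productBernoulli p)) + t ≤ f x}
      ≤ ENNReal.ofReal (Real.exp (-(s * t))) := by
  obtain ⟨hs0, _⟩ := hs
  have hq : ∀ i, Real.exp (-s) * p i ∈ Set.Icc (0:ℝ) 1 := by
    intro i
    have h1 : Real.exp (-s) ≤ 1 := by
      rw [show (1:ℝ) = Real.exp 0 by simp]
      exact Real.exp_le_exp.2 (by linarith)
    have h2 : (0:ℝ) < Real.exp (-s) := Real.exp_pos _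
    rcases hp i with ⟨ha, hb⟩
    exact ⟨by positivity, by nlinarith⟩
  rw [integral_eq_sum p hp f]
  set m := ∑ x, BW p x * f x with hm
  set S : Finset (Fin n → Bool) := Finset.univ.filter (fun x => m + t ≤ f x) with hS
  have hsub : {x | m + t ≤ f x} ⊆ ⋃ x ∈ S, {x} := by
    intro x hx
    simp only [Set.mem_iUnion]
    exact ⟨x, by simp [hS]; exact hx, rfl⟩
  have hsum : ∑ x ∈ S, BW (fun i => Real.exp (-s) * p i) x ≤ Real.exp (-(s * t)) := by
    have h1 : ∀ x ∈ S, BW (fun i => Real.exp (-s) * p i) x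
        ≤ BW (fun i => Real.exp (-s) * p i) x * Real.exp (s * (f x - (m + t))) := by
      intro x hx
      have hfx : m + t ≤ f x := by
        rw [hS, Finset.mem_filter] at hx
        exact hx.2
      have hone : (1:ℝ) ≤ Real.exp (s * (f x - (m + t))) := by
        rw [show (1:ℝ) = Real.exp 0 by simp]
        apply Real.exp_le_exp.2
        nlinarith
      nlinarith [BW_nonneg hq x]
    calc ∑ x ∈ S, BW (fun i => Real.exp (-s) * p i) x
        ≤ ∑ x ∈ S, BW (fun i => Real.exp (-s) * p i) x * Real.exp (s * (f x - (m + t))) :=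
          Finset.sum_le_sum h1
      _ ≤ ∑ x, BW (fun i => Real.exp (-s) * p i) x * Real.exp (s * (f x - (m + t))) := by
          apply Finset.sum_le_sum_of_subset_of_nonneg (Finset.subset_univ S)
          intro x _ _
          exact mul_nonneg (BW_nonneg hq x) (Real.exp_pos _).le
      _ = Real.exp (-(s * (m + t))) * ∑ x, BW (fun i => Real.exp (-s) * p i) x
            * Real.exp (s * f x) := by
          rw [Finset.mul_sum]
          apply Finset.sum_congr rfl
          intro x _
          rw [show s * (f x - (m + t)) = -(s * (m + t)) + s * f x by ring, Real.exp_add]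
          ring
      _ ≤ Real.exp (-(s * (m + t))) * Real.exp (s * m) := by
          apply mul_le_mul_of_nonneg_left _ (Real.exp_pos _).le
          exact mgf_bound n p hp f hf_mono hf_lip s hs0
      _ = Real.exp (-(s * t)) := by
          rw [← Real.exp_add]
          congr 1
          ring
  calc productBernoulli (fun i => Real.exp (-s) * p i) {x | m + t ≤ f x}
      ≤ ∑ x ∈ S, productBernoulli (fun i => Real.exp (-s) * p i) {x} :=
        (measure_mono hsub).trans (measure_biUnion_finset_le S _)
    _ = ∑ x ∈ S, ENNReal.ofReal (BW (fun i => Real.exp (-s) * p i) x) :=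
        Finset.sum_congr rfl fun x _ => productBernoulli_singleton _ hq x
    _ = ENNReal.ofReal (∑ x ∈ S, BW (fun i => Real.exp (-s) * p i) x) :=
        (ENNReal.ofReal_sum_of_nonneg fun x _ => BW_nonneg hq x).symm
    _ ≤ ENNReal.ofReal (Real.exp (-(s * t))) := ENNReal.ofReal_le_ofReal hsum
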